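/- Let X be a (not necessarily Hausdorff) topological space such that every compact subset of X is metrizable in the subspace topology. Let Ω be a σ-algebra of subsets of X such that every continuous compactly supported function f: X → ℝ is Ω-measurable, and let μ be a measure on Ω. Let L⁰(X,Ω,μ) be the vector lattice of μ-almost-everywhere equivalence classes of Ω-measurable real functions on X, and let j: C_c(X) → L⁰(X,Ω,μ) be the map sending f to its equivalence class [f]. Let E be a Banach function space over (X,Ω,μ), i.e. an order ideal of L⁰(X,Ω,μ) equipped with a norm under which it is a Banach lattice (with the order induced from L⁰), and suppose that j(C_c(X)) ⊆ E and that j(C_c(X)) is norm dense in E. Then E has order continuous norm. -/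

import Mathlib

open Set Filter MeasureTheory

noncomputable def phi19 (t : ℝ) : ℝ := ∑' j : ℕ, (2:ℝ)^j * min |t| ((1/8:ℝ)^j)

lemma phi19_term_nonneg (t : ℝ) (j : ℕ) : 0 ≤ (2:ℝ)^j * min |t| ((1/8:ℝ)^j) :=
  mul_nonneg (by positivity) (le_min (abs_nonneg t) (by positivity))

lemma phi19_term_le (t : ℝ) (j : ℕ) : (2:ℝ)^j * min |t| ((1/8:ℝ)^j) ≤ (1/4:ℝ)^j := by
  have h1 : min |t| ((1/8:ℝ)^j) ≤ (1/8:ℝ)^j := min_le_right _ _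
  have h2 : (2:ℝ)^j * (1/8:ℝ)^j = (1/4:ℝ)^j := by
    rw [← mul_pow]; norm_num
  calc (2:ℝ)^j * min |t| ((1/8:ℝ)^j) ≤ (2:ℝ)^j * (1/8:ℝ)^j :=
        mul_le_mul_of_nonneg_left h1 (by positivity)
    _ = (1/4:ℝ)^j := h2

lemma phi19_summable (t : ℝ) : Summable (fun j : ℕ => (2:ℝ)^j * min |t| ((1/8:ℝ)^j)) :=
  Summable.of_nonneg_of_le (phi19_term_nonneg t) (phi19_term_le t)
    (summable_geometric_of_lt_one (by norm_num) (by norm_num))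

lemma phi19_nonneg (t : ℝ) : 0 ≤ phi19 t :=
  tsum_nonneg (phi19_term_nonneg t)

lemma phi19_continuous : Continuous phi19 := by
  apply continuous_tsum (u := fun j : ℕ => (1/4:ℝ)^j)
  · intro j
    exact continuous_const.mul (continuous_abs.min continuous_const)
  · exact summable_geometric_of_lt_one (by norm_num) (by norm_num)
  · intro j t
    rw [Real.norm_eq_abs, abs_of_nonneg (phi19_term_nonneg t j)]
    exact phi19_term_le t j

lemma phi19_zero : phi19 0 = 0 := by
  have h : ∀ j : ℕ, (2:ℝ)^j * min |(0:ℝ)| ((1/8:ℝ)^j) = 0 := by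
    intro j
    rw [abs_zero, min_eq_left (by positivity : (0:ℝ) ≤ (1/8:ℝ)^j), mul_zero]
  simp [phi19, h]

lemma phi19_ge (t : ℝ) (j : ℕ) : min |t| ((1/8:ℝ)^j) ≤ (1/2:ℝ)^j * phi19 t := by
  have h := Summable.le_tsum (phi19_summable t) j (fun k _ => phi19_term_nonneg t k)
  have h2 : (1/2:ℝ)^j * (2:ℝ)^j = 1 := by rw [← mul_pow]; norm_num
  calc min |t| ((1/8:ℝ)^j) = ((1/2:ℝ)^j * (2:ℝ)^j) * min |t| ((1/8:ℝ)^j) := by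
        rw [h2, one_mul]
    _ = (1/2:ℝ)^j * ((2:ℝ)^j * min |t| ((1/8:ℝ)^j)) := by ring
    _ ≤ (1/2:ℝ)^j * phi19 t := mul_le_mul_of_nonneg_left h (by positivity)

lemma trunc19 (a b p c0 : ℝ) (hp : 0 ≤ p) (hpc : p ≤ c0) :
    |min (max a 0) b - p| ≤ |a - p| + |b - c0| := by
  have hp' : p = min (max p 0) c0 := by rw [max_eq_left hp, min_eq_left hpc]
  calc |min (max a 0) b - p| = |min (max a 0) b - min (max p 0) c0| := by rw [← hp']
    _ ≤ max |max a 0 - max p 0| |b - c0| := abs_min_sub_min_le_max _ _ _ _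
    _ ≤ max |a - p| |b - c0| := max_le_max (abs_max_sub_max_le_abs _ _ _) le_rfl
    _ ≤ |a - p| + |b - c0| :=
        max_le (le_add_of_nonneg_right (abs_nonneg _)) (le_add_of_nonneg_left (abs_nonneg _))

lemma clamp19 (p a : ℝ) (hp : 0 ≤ p) : |max a 0 - p| ≤ |a - p| := by
  calc |max a 0 - p| = |max a 0 - max p 0| := by rw [max_eq_left hp]
    _ ≤ |a - p| := abs_max_sub_max_le_abs _ _ _

theorem banachFunctionSpace_orderContinuous
    {X : Type*} [TopologicalSpace X] [MeasurableSpace X]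
    (μ : Measure X)
    (hK : ∀ K : Set X, IsCompact K → TopologicalSpace.MetrizableSpace K)
    (hmeas : ∀ f : X → ℝ, Continuous f → HasCompactSupport f → Measurable f)
    {E : Type*} [NormedAddCommGroup E] [Lattice E] [HasSolidNorm E]
      [IsOrderedAddMonoid E] [NormedSpace ℝ E] [CompleteSpace E]
    (T : E →ₗ[ℝ] (X →ₘ[μ] ℝ))
    (hT_ord : ∀ x y : E, x ≤ y ↔ T x ≤ T y)
    (hT_ideal : ∀ f g : X →ₘ[μ] ℝ, g ∈ LinearMap.range T → |f| ≤ |g| →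
      f ∈ LinearMap.range T)
    (hCc_sub : ∀ (f : X → ℝ) (hf : Continuous f) (hfc : HasCompactSupport f),
      AEEqFun.mk f ((hmeas f hf hfc).aestronglyMeasurable) ∈ LinearMap.range T)
    (hdense : Dense {e : E | ∃ (f : X → ℝ) (hf : Continuous f) (hfc : HasCompactSupport f),
      T e = AEEqFun.mk f ((hmeas f hf hfc).aestronglyMeasurable)}) :
    ∀ (x : ℕ → E) (b : E), Monotone x → (∀ n, x n ≤ b) →
      ∃ l : E, Tendsto x atTop (nhds l) := by
  classical
  intro x b hmono hbd
  by_contra hno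
  -- x is not Cauchy
  have hnc : ¬ CauchySeq x := by
    intro hc
    obtain ⟨l, hl⟩ := cauchySeq_tendsto_of_complete hc
    exact hno ⟨l, hl⟩
  rw [Metric.cauchySeq_iff] at hnc
  push_neg at hnc
  obtain ⟨ε, hε, H⟩ := hnc
  -- L⁰ pointwise abs facts
  have hTle_abs : ∀ g : X →ₘ[μ] ℝ, g ≤ |g| := by
    intro g; rw [← AEEqFun.coeFn_le]
    filter_upwards [AEEqFun.coeFn_abs g] with ω h
    rw [h]; exact le_abs_self _
  have hTneg_le_abs : ∀ g : X →ₘ[μ] ℝ, -g ≤ |g| := by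
    intro g; rw [← AEEqFun.coeFn_le]
    filter_upwards [AEEqFun.coeFn_abs g, AEEqFun.coeFn_neg g] with ω h h2
    rw [h, h2, Pi.neg_apply]; exact neg_le_abs _
  have hTabs_abs : ∀ g : X →ₘ[μ] ℝ, |(|g|)| ≤ |g| := by
    intro g; rw [← AEEqFun.coeFn_le]
    filter_upwards [AEEqFun.coeFn_abs |g|, AEEqFun.coeFn_abs g] with ω h1 h2
    rw [h1, h2]; exact (abs_abs _).le
  have hTabs_le : ∀ g h : X →ₘ[μ] ℝ, g ≤ h → -g ≤ h → |g| ≤ h := by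
    intro g h hg hneg
    rw [← AEEqFun.coeFn_le]
    filter_upwards [AEEqFun.coeFn_abs g, AEEqFun.coeFn_le.2 hg,
      AEEqFun.coeFn_le.2 hneg, AEEqFun.coeFn_neg g] with ω h1 h2 h3 h4
    rw [h1]
    rw [h4, Pi.neg_apply] at h3
    exact abs_le'.2 ⟨h2, h3⟩
  -- T is a lattice homomorphism for abs
  have habsT : ∀ u : E, T |u| = |T u| := by
    intro u
    obtain ⟨z, hz⟩ := LinearMap.mem_range.1
      (hT_ideal |T u| (T u) ⟨u, rfl⟩ (hTabs_abs (T u)))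
    have hz1 : u ≤ z := (hT_ord _ _).2 (by rw [hz]; exact hTle_abs (T u))
    have hz2 : -u ≤ z := (hT_ord _ _).2 (by rw [map_neg, hz]; exact hTneg_le_abs (T u))
    have h1 : T |u| ≤ |T u| := by
      rw [← hz]; exact (hT_ord _ _).1 (abs_le'.2 ⟨hz1, hz2⟩)
    have h2 : |T u| ≤ T |u| :=
      hTabs_le (T u) (T |u|) ((hT_ord _ _).1 (le_abs_self u))
        (by rw [← map_neg]; exact (hT_ord _ _).1 (neg_le_abs u))
    exact le_antisymm h1 h2
  have hnorm_le : ∀ u v : E, (∀ᵐ ω ∂μ, |(T u : X → ℝ) ω| ≤ |(T v : X → ℝ) ω|) → ‖u‖ ≤ ‖v‖ := by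
    intro u v h
    have h0 : |T u| ≤ |T v| := by
      rw [← AEEqFun.coeFn_le]
      filter_upwards [AEEqFun.coeFn_abs (T u), AEEqFun.coeFn_abs (T v), h] with ω h1 h2 h3
      rw [h1, h2]; exact h3
    have : |u| ≤ |v| := (hT_ord _ _).2 (by rw [habsT, habsT]; exact h0)
    exact HasSolidNorm.solid this
  have hnorm_le2 : ∀ u v1 v2 : E,
      (∀ᵐ ω ∂μ, |(T u : X → ℝ) ω| ≤ |(T v1 : X → ℝ) ω| + |(T v2 : X → ℝ) ω|) →
      ‖u‖ ≤ ‖v1‖ + ‖v2‖ := by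
    intro u v1 v2 h
    have h0 : |T u| ≤ |T v1| + |T v2| := by
      rw [← AEEqFun.coeFn_le]
      filter_upwards [AEEqFun.coeFn_abs (T u), AEEqFun.coeFn_abs (T v1),
        AEEqFun.coeFn_abs (T v2), AEEqFun.coeFn_add |T v1| |T v2|, h] with ω h1 h2 h3 h4 h5
      rw [h1, h4, Pi.add_apply, h2, h3]; exact h5
    have hE : |u| ≤ |v1| + |v2| := by
      rw [hT_ord, map_add, habsT, habsT, habsT]; exact h0
    calc ‖u‖ = ‖|u|‖ := (norm_abs_eq_norm u).symm
      _ ≤ ‖|v1| + |v2|‖ := HasSolidNorm.solid (by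
          rw [abs_abs, abs_of_nonneg (add_nonneg (abs_nonneg v1) (abs_nonneg v2))]
          exact hE)
      _ ≤ ‖|v1|‖ + ‖|v2|‖ := norm_add_le _ _
      _ = ‖v1‖ + ‖v2‖ := by rw [norm_abs_eq_norm, norm_abs_eq_norm]
  -- extract pairs with big gaps
  have H' : ∀ N : ℕ, ∃ p : ℕ × ℕ, N ≤ p.1 ∧ p.1 < p.2 ∧ ε ≤ ‖x p.2 - x p.1‖ := by
    intro N
    obtain ⟨m, hm, n, hn, hd⟩ := H N
    rcases lt_trichotomy m n with h | h | h
    · exact ⟨(m, n), hm, h, by rwa [dist_comm, dist_eq_norm] at hd⟩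
    · exfalso; rw [h, dist_self] at hd; linarith
    · exact ⟨(n, m), hn, h, by rwa [dist_eq_norm] at hd⟩
  choose p hp1 hp2 hp3 using H'
  let a : ℕ → ℕ × ℕ := fun k => Nat.rec (p 0) (fun _ q => p q.2) k
  have haS : ∀ k, a (k + 1) = p (a k).2 := fun k => rfl
  have ha2 : ∀ k, (a k).1 < (a k).2 := by
    intro k; cases k with
    | zero => exact hp2 0
    | succ k => rw [haS]; exact hp2 _
  have ha3 : ∀ k, ε ≤ ‖x (a k).2 - x (a k).1‖ := by
    intro k; cases k with
    | zero => exact hp3 0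
    | succ k => rw [haS]; exact hp3 _
  have hchain : ∀ k, (a k).2 ≤ (a (k + 1)).1 := by
    intro k; rw [haS]; exact hp1 _
  set y : ℕ → E := fun k => x (a k).2 - x (a k).1 with hy_def
  have hy0 : ∀ k, 0 ≤ y k := fun k => sub_nonneg.2 (hmono (ha2 k).le)
  have hynorm : ∀ k, ε ≤ ‖y k‖ := ha3
  set c : E := b - x (a 0).1 with hc_def
  have hc0 : 0 ≤ c := sub_nonneg.2 (hbd _)
  have hsum : ∀ N, ∑ k ∈ Finset.range N, y k ≤ x (a N).1 - x (a 0).1 := by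
    intro N
    induction N with
    | zero => simp
    | succ N ih =>
      rw [Finset.sum_range_succ]
      calc ∑ k ∈ Finset.range N, y k + y N
          ≤ (x (a N).1 - x (a 0).1) + (x (a N).2 - x (a N).1) := add_le_add ih le_rfl
        _ = x (a N).2 - x (a 0).1 := by abel
        _ ≤ x (a (N + 1)).1 - x (a 0).1 := sub_le_sub_right (hmono (hchain N)) _
  have hsumc : ∀ N, ∑ k ∈ Finset.range N, y k ≤ c :=
    fun N => (hsum N).trans (sub_le_sub_right (hbd _) _)
  -- measurable representatives
  have hz : ∀ k, ∃ Z : X → ℝ, Measurable Z ∧ (T (y k) : X → ℝ) =ᵐ[μ] Z := by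
    intro k
    have h := (T (y k)).aestronglyMeasurable.aemeasurable
    exact ⟨h.mk _, h.measurable_mk, h.ae_eq_mk⟩
  choose Z hZm hZe using hz
  have hTy0 : ∀ k, (0 : X →ₘ[μ] ℝ) ≤ T (y k) := by
    intro k
    have := (hT_ord 0 (y k)).1 (hy0 k)
    rwa [map_zero] at this
  have hTc0 : (0 : X →ₘ[μ] ℝ) ≤ T c := by
    have := (hT_ord 0 c).1 hc0
    rwa [map_zero] at this
  have hTsum : ∀ N, (T (∑ k ∈ Finset.range N, y k) : X → ℝ) =ᵐ[μ]
      fun ω => ∑ k ∈ Finset.range N, (T (y k) : X → ℝ) ω := by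
    intro N
    induction N with
    | zero =>
      simp only [Finset.range_zero, Finset.sum_empty, map_zero]
      filter_upwards [AEEqFun.coeFn_zero (β := ℝ) (μ := μ)] with ω h
      simpa using h
    | succ N ih =>
      rw [Finset.sum_range_succ, map_add]
      filter_upwards [AEEqFun.coeFn_add (T (∑ k ∈ Finset.range N, y k)) (T (y N)), ih]
        with ω h1 h2
      rw [h1, Pi.add_apply, h2, Finset.sum_range_succ]
  -- the good a.e. set
  have hgood : ∀ᵐ ω ∂μ, (∀ k, (T (y k) : X → ℝ) ω = Z k ω) ∧
      (∀ k, 0 ≤ (T (y k) : X → ℝ) ω) ∧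
      (∀ N, ∑ k ∈ Finset.range N, Z k ω ≤ (T c : X → ℝ) ω) ∧
      0 ≤ (T c : X → ℝ) ω := by
    have h1 : ∀ᵐ ω ∂μ, ∀ k, (T (y k) : X → ℝ) ω = Z k ω := ae_all_iff.2 hZe
    have h2 : ∀ᵐ ω ∂μ, ∀ k, 0 ≤ (T (y k) : X → ℝ) ω := by
      rw [ae_all_iff]
      intro k
      filter_upwards [AEEqFun.coeFn_le.2 (hTy0 k), AEEqFun.coeFn_zero (β := ℝ) (μ := μ)]
        with ω ha hb
      rw [hb, Pi.zero_apply] at ha; exact ha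
    have h3 : ∀ᵐ ω ∂μ, ∀ N, ∑ k ∈ Finset.range N, Z k ω ≤ (T c : X → ℝ) ω := by
      rw [ae_all_iff]
      intro N
      have hle := (hT_ord _ _).1 (hsumc N)
      filter_upwards [AEEqFun.coeFn_le.2 hle, hTsum N, h1] with ω ha hb hc
      calc ∑ k ∈ Finset.range N, Z k ω = ∑ k ∈ Finset.range N, (T (y k) : X → ℝ) ω :=
            Finset.sum_congr rfl fun k _ => (hc k).symm
        _ = (T (∑ k ∈ Finset.range N, y k) : X → ℝ) ω := hb.symm
        _ ≤ (T c : X → ℝ) ω := ha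
    have h4 : ∀ᵐ ω ∂μ, 0 ≤ (T c : X → ℝ) ω := by
      filter_upwards [AEEqFun.coeFn_le.2 hTc0, AEEqFun.coeFn_zero (β := ℝ) (μ := μ)]
        with ω ha hb
      rw [hb, Pi.zero_apply] at ha; exact ha
    filter_upwards [h1, h2, h3, h4] with ω a1 a2 a3 a4
    exact ⟨a1, a2, a3, a4⟩
  -- partial sums over arbitrary subsets of ℕ, in ℝ≥0∞
  set G : Set ℕ → X → ENNReal :=
    fun A ω => ∑' k, Set.indicator A (fun i => ENNReal.ofReal (Z i ω)) k with hG_def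
  set F : Set ℕ → X → ℝ := fun A ω => (G A ω).toReal with hF_def
  have hFmeas : ∀ A, Measurable (F A) := by
    intro A
    apply Measurable.ennreal_toReal
    apply Measurable.ennreal_tsum
    intro k
    by_cases h : k ∈ A
    · simpa [Set.indicator_of_mem h] using (hZm k).ennreal_ofReal
    · simpa [Set.indicator_of_notMem h] using measurable_const
  -- pointwise facts on the good set
  have hGle : ∀ (A : Set ℕ) (ω : X), (∀ k, (T (y k) : X → ℝ) ω = Z k ω) →
      (∀ k, 0 ≤ (T (y k) : X → ℝ) ω) →
      (∀ N, ∑ k ∈ Finset.range N, Z k ω ≤ (T c : X → ℝ) ω) →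
      G A ω ≤ ENNReal.ofReal ((T c : X → ℝ) ω) := by
    intro A ω hZeq h0 hS
    simp only [hG_def]
    rw [ENNReal.tsum_eq_iSup_sum]
    apply iSup_le
    intro s
    obtain ⟨N, hN⟩ : ∃ N, s ⊆ Finset.range N :=
      ⟨s.sup id + 1, fun i hi => Finset.mem_range.2 (Nat.lt_succ_of_le (Finset.le_sup (f := id) hi))⟩
    calc ∑ k ∈ s, Set.indicator A (fun i => ENNReal.ofReal (Z i ω)) k
        ≤ ∑ k ∈ Finset.range N, Set.indicator A (fun i => ENNReal.ofReal (Z i ω)) k :=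
          Finset.sum_le_sum_of_subset hN
      _ ≤ ∑ k ∈ Finset.range N, ENNReal.ofReal (Z k ω) := by
          apply Finset.sum_le_sum
          intro k _
          by_cases h : k ∈ A
          · rw [Set.indicator_of_mem h]
          · rw [Set.indicator_of_notMem h]; exact zero_le
      _ = ENNReal.ofReal (∑ k ∈ Finset.range N, Z k ω) :=
          (ENNReal.ofReal_sum_of_nonneg fun k _ => (hZeq k) ▸ h0 k).symm
      _ ≤ ENNReal.ofReal ((T c : X → ℝ) ω) := ENNReal.ofReal_le_ofReal (hS N)
  have hF0 : ∀ A ω, 0 ≤ F A ω := fun A ω => ENNReal.toReal_nonneg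
  have hFle : ∀ (A : Set ℕ) (ω : X), (∀ k, (T (y k) : X → ℝ) ω = Z k ω) →
      (∀ k, 0 ≤ (T (y k) : X → ℝ) ω) →
      (∀ N, ∑ k ∈ Finset.range N, Z k ω ≤ (T c : X → ℝ) ω) →
      0 ≤ (T c : X → ℝ) ω → F A ω ≤ (T c : X → ℝ) ω := by
    intro A ω hZeq h0 hS hc
    exact ENNReal.toReal_le_of_le_ofReal hc (hGle A ω hZeq h0 hS)
  have hFadd : ∀ (A B : Set ℕ), A ⊆ B → ∀ (ω : X), (∀ k, (T (y k) : X → ℝ) ω = Z k ω) →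
      (∀ k, 0 ≤ (T (y k) : X → ℝ) ω) →
      (∀ N, ∑ k ∈ Finset.range N, Z k ω ≤ (T c : X → ℝ) ω) →
      ∀ k0 ∈ B \ A, F A ω + Z k0 ω ≤ F B ω := by
    intro A B hAB ω hZeq h0 hS k0 hk0
    have hsplit : ∀ k, Set.indicator B (fun i => ENNReal.ofReal (Z i ω)) k =
        Set.indicator A (fun i => ENNReal.ofReal (Z i ω)) k +
        Set.indicator (B \ A) (fun i => ENNReal.ofReal (Z i ω)) k := by
      intro k
      by_cases hA : k ∈ A
      · have hB : k ∈ B := hAB hA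
        have hBA : k ∉ B \ A := fun h => h.2 hA
        rw [Set.indicator_of_mem hB, Set.indicator_of_mem hA, Set.indicator_of_notMem hBA,
          add_zero]
      · by_cases hB : k ∈ B
        · have hBA : k ∈ B \ A := ⟨hB, hA⟩
          rw [Set.indicator_of_mem hB, Set.indicator_of_mem hBA, Set.indicator_of_notMem hA,
            zero_add]
        · have hBA : k ∉ B \ A := fun h => hB h.1
          rw [Set.indicator_of_notMem hB, Set.indicator_of_notMem hBA,
            Set.indicator_of_notMem hA, add_zero]
    have hGBsplit : G B ω = G A ω + G (B \ A) ω := by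
      calc G B ω = ∑' k, (Set.indicator A (fun i => ENNReal.ofReal (Z i ω)) k +
            Set.indicator (B \ A) (fun i => ENNReal.ofReal (Z i ω)) k) := by
            simp only [hG_def]; exact tsum_congr hsplit
        _ = G A ω + G (B \ A) ω := by
            simp only [hG_def]; exact Summable.tsum_add ENNReal.summable ENNReal.summable
    have hGA_ne : G A ω ≠ ⊤ :=
      ((hGle A ω hZeq h0 hS).trans_lt ENNReal.ofReal_lt_top).ne
    have hGBA_ne : G (B \ A) ω ≠ ⊤ :=
      ((hGle (B \ A) ω hZeq h0 hS).trans_lt ENNReal.ofReal_lt_top).ne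
    have hterm : ENNReal.ofReal (Z k0 ω) ≤ G (B \ A) ω := by
      have h1 := ENNReal.le_tsum
        (f := fun k => Set.indicator (B \ A) (fun i => ENNReal.ofReal (Z i ω)) k) k0
      rw [Set.indicator_of_mem hk0] at h1
      simpa only [hG_def] using h1
    have hFB : F B ω = F A ω + (G (B \ A) ω).toReal := by
      simp only [hF_def]
      rw [hGBsplit, ENNReal.toReal_add hGA_ne hGBA_ne]
    rw [hFB]
    have : Z k0 ω ≤ (G (B \ A) ω).toReal := by
      have h := ENNReal.toReal_mono hGBA_ne hterm
      rwa [ENNReal.toReal_ofReal ((hZeq k0) ▸ h0 k0)] at h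
    linarith
  -- membership in the range of T
  have hFmem : ∀ A : Set ℕ,
      AEEqFun.mk (F A) ((hFmeas A).aestronglyMeasurable) ∈ LinearMap.range T := by
    intro A
    apply hT_ideal _ (T c) ⟨c, rfl⟩
    rw [← AEEqFun.coeFn_le]
    filter_upwards [AEEqFun.coeFn_abs (AEEqFun.mk (F A) ((hFmeas A).aestronglyMeasurable)),
      AEEqFun.coeFn_abs (T c), AEEqFun.coeFn_mk (F A) ((hFmeas A).aestronglyMeasurable),
      hgood] with ω h1 h2 h3 hg
    rw [h1, h2, h3]
    rw [abs_of_nonneg (hF0 A ω)]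
    exact (hFle A ω hg.1 hg.2.1 hg.2.2.1 hg.2.2.2).trans (le_abs_self _)
  -- the uncountable chain
  let eq : ℕ ≃ ℚ := (Denumerable.eqv ℚ).symm
  set A' : ℝ → Set ℕ := fun r => {k : ℕ | ((eq k : ℚ) : ℝ) < r} with hA'_def
  have hrange : ∀ r : ℝ, ∃ e : E, T e = AEEqFun.mk (F (A' r)) ((hFmeas (A' r)).aestronglyMeasurable) :=
    fun r => LinearMap.mem_range.1 (hFmem (A' r))
  choose s hs using hrange
  -- the s r are ε-separated and in [0, c]
  have hsae : ∀ r : ℝ, (T (s r) : X → ℝ) =ᵐ[μ] F (A' r) := by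
    intro r
    rw [hs r]
    exact AEEqFun.coeFn_mk _ _
  have hsep : ∀ r r' : ℝ, r < r' → ε ≤ ‖s r' - s r‖ := by
    intro r r' hrr'
    obtain ⟨q, hq1, hq2⟩ := exists_rat_btwn hrr'
    obtain ⟨k, hkmem⟩ : ∃ k : ℕ, k ∈ A' r' \ A' r := by
      refine ⟨eq.symm q, ?_, ?_⟩
      · show ((eq (eq.symm q) : ℚ) : ℝ) < r'
        rw [Equiv.apply_symm_apply]; exact hq2
      · show ¬ (((eq (eq.symm q) : ℚ) : ℝ) < r)
        rw [Equiv.apply_symm_apply]; exact not_lt.2 hq1.le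
    have hAB : A' r ⊆ A' r' := fun i hi => lt_trans hi hrr'
    have hyle : y k ≤ s r' - s r := by
      rw [hT_ord, map_sub T (s r') (s r)]
      rw [← AEEqFun.coeFn_le]
      filter_upwards [AEEqFun.coeFn_sub (T (s r')) (T (s r)), hsae r', hsae r, hgood]
        with ω hsub h1 h2 hg
      rw [hsub, Pi.sub_apply, h1, h2]
      have hadd := hFadd (A' r) (A' r') hAB ω hg.1 hg.2.1 hg.2.2.1 k hkmem
      have hZk : (T (y k) : X → ℝ) ω = Z k ω := hg.1 k
      rw [hZk]
      linarith
    have habs : |y k| ≤ |s r' - s r| := by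
      rw [abs_of_nonneg (hy0 k), abs_of_nonneg ((hy0 k).trans hyle)]
      exact hyle
    exact (hynorm k).trans (HasSolidNorm.solid habs)
  -- approximate c by a nonnegative continuous compactly supported function
  obtain ⟨d0, hd0mem⟩ := Metric.dense_iff.1 hdense c (ε/16) (by positivity)
  obtain ⟨f0, hf0cont, hf0supp, hTd0⟩ := hd0mem.2
  have hd0dist : ‖c - d0‖ < ε/16 := by
    have := Metric.mem_ball.1 hd0mem.1
    rwa [dist_eq_norm, norm_sub_rev] at this
  set f : X → ℝ := fun x' => max (f0 x') 0 with hf_def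
  have hfcont : Continuous f := hf0cont.max continuous_const
  have hf0' : ∀ x', 0 ≤ f x' := fun x' => le_max_right _ _
  have hfsupp : HasCompactSupport f := by
    apply hf0supp.mono
    intro x' hx'
    simp only [Function.mem_support] at hx' ⊢
    intro h0
    exact hx' (by rw [hf_def]; simp [h0])
  obtain ⟨ec, hTec⟩ := LinearMap.mem_range.1 (hCc_sub f hfcont hfsupp)
  have hcec : ‖c - ec‖ < ε/16 := by
    have hle : ‖c - ec‖ ≤ ‖c - d0‖ := by
      apply hnorm_le
      have h1 : (T (c - ec) : X → ℝ) =ᵐ[μ] (T c : X → ℝ) - (T ec : X → ℝ) := by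
        rw [map_sub T c ec]; exact AEEqFun.coeFn_sub _ _
      have h2 : (T (c - d0) : X → ℝ) =ᵐ[μ] (T c : X → ℝ) - (T d0 : X → ℝ) := by
        rw [map_sub T c d0]; exact AEEqFun.coeFn_sub _ _
      have h3 : (T ec : X → ℝ) =ᵐ[μ] f := by rw [hTec]; exact AEEqFun.coeFn_mk _ _
      have h4 : (T d0 : X → ℝ) =ᵐ[μ] f0 := by rw [hTd0]; exact AEEqFun.coeFn_mk _ _
      filter_upwards [h1, h2, h3, h4, hgood] with ω e1 e2 e3 e4 hg
      rw [e1, e2, Pi.sub_apply, Pi.sub_apply, e3, e4]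
      calc |(T c : X → ℝ) ω - f ω| = |f ω - (T c : X → ℝ) ω| := abs_sub_comm _ _
        _ ≤ |f0 ω - (T c : X → ℝ) ω| := clamp19 _ _ hg.2.2.2
        _ = |(T c : X → ℝ) ω - f0 ω| := abs_sub_comm _ _
    exact lt_of_le_of_lt hle hd0dist
  -- approximate each s r by a truncated continuous function
  have happrox : ∀ r : ℝ, ∃ (t : E) (χ : X → ℝ) (hχ1 : Continuous χ) (hχ2 : HasCompactSupport χ),
      (∀ x', 0 ≤ χ x') ∧ (∀ x', χ x' ≤ f x') ∧
      T t = AEEqFun.mk χ ((hmeas χ hχ1 hχ2).aestronglyMeasurable) ∧ ‖s r - t‖ < ε/8 := by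
    intro r
    obtain ⟨dr, hdrmem⟩ := Metric.dense_iff.1 hdense (s r) (ε/16) (by positivity)
    obtain ⟨g, hgcont, hgsupp, hTdr⟩ := hdrmem.2
    have hdrdist : ‖s r - dr‖ < ε/16 := by
      have := Metric.mem_ball.1 hdrmem.1
      rwa [dist_eq_norm, norm_sub_rev] at this
    have hχ1 : Continuous (fun x' => min (max (g x') 0) (f x')) :=
      (hgcont.max continuous_const).min hfcont
    have hχ2 : HasCompactSupport (fun x' => min (max (g x') 0) (f x')) := by
      apply hfsupp.mono
      intro x' hx'
      simp only [Function.mem_support] at hx' ⊢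
      intro h0
      exact hx' (by rw [h0]; exact min_eq_right (le_max_right _ _))
    obtain ⟨t, hTt⟩ := LinearMap.mem_range.1 (hCc_sub _ hχ1 hχ2)
    refine ⟨t, _, hχ1, hχ2, fun x' => le_min (le_max_right _ _) (hf0' x'),
      fun x' => min_le_right _ _, hTt, ?_⟩
    have hle : ‖s r - t‖ ≤ ‖s r - dr‖ + ‖c - ec‖ := by
      apply hnorm_le2
      have h1 : (T (s r - t) : X → ℝ) =ᵐ[μ] (T (s r) : X → ℝ) - (T t : X → ℝ) := by
        rw [map_sub T (s r) t]; exact AEEqFun.coeFn_sub _ _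
      have h2 : (T (s r - dr) : X → ℝ) =ᵐ[μ] (T (s r) : X → ℝ) - (T dr : X → ℝ) := by
        rw [map_sub T (s r) dr]; exact AEEqFun.coeFn_sub _ _
      have h3 : (T (c - ec) : X → ℝ) =ᵐ[μ] (T c : X → ℝ) - (T ec : X → ℝ) := by
        rw [map_sub T c ec]; exact AEEqFun.coeFn_sub _ _
      have h4 : (T t : X → ℝ) =ᵐ[μ] (fun x' => min (max (g x') 0) (f x')) := by
        rw [hTt]; exact AEEqFun.coeFn_mk _ _
      have h5 : (T dr : X → ℝ) =ᵐ[μ] g := by rw [hTdr]; exact AEEqFun.coeFn_mk _ _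
      have h6 : (T ec : X → ℝ) =ᵐ[μ] f := by rw [hTec]; exact AEEqFun.coeFn_mk _ _
      filter_upwards [h1, h2, h3, h4, h5, h6, hsae r, hgood] with ω e1 e2 e3 e4 e5 e6 e7 hg
      rw [e1, e2, e3, Pi.sub_apply, Pi.sub_apply, Pi.sub_apply, e4, e5, e6]
      have hp0 : 0 ≤ (T (s r) : X → ℝ) ω := by rw [e7]; exact hF0 _ ω
      have hpc : (T (s r) : X → ℝ) ω ≤ (T c : X → ℝ) ω := by
        rw [e7]; exact hFle _ ω hg.1 hg.2.1 hg.2.2.1 hg.2.2.2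
      calc |(T (s r) : X → ℝ) ω - min (max (g ω) 0) (f ω)|
          = |min (max (g ω) 0) (f ω) - (T (s r) : X → ℝ) ω| := abs_sub_comm _ _
        _ ≤ |g ω - (T (s r) : X → ℝ) ω| + |f ω - (T c : X → ℝ) ω| := trunc19 _ _ _ _ hp0 hpc
        _ = |(T (s r) : X → ℝ) ω - g ω| + |(T c : X → ℝ) ω - f ω| := by
            rw [abs_sub_comm (g ω), abs_sub_comm (f ω)]
    calc ‖s r - t‖ ≤ ‖s r - dr‖ + ‖c - ec‖ := hle
      _ < ε/16 + ε/16 := add_lt_add hdrdist hcec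
      _ = ε/8 := by ring
  choose t χ hχ1 hχ2 hχ0 hχle hTt hst using happrox
  -- the dominating element for small truncations
  have hΦcont : Continuous (fun x' => phi19 (f x')) := phi19_continuous.comp hfcont
  have hΦsupp : HasCompactSupport (fun x' => phi19 (f x')) := by
    apply hfsupp.mono
    intro x' hx'
    simp only [Function.mem_support] at hx' ⊢
    intro h0
    exact hx' (by rw [h0, phi19_zero])
  obtain ⟨W, hTW⟩ := LinearMap.mem_range.1 (hCc_sub _ hΦcont hΦsupp)
  have hW0 : 0 ≤ W := by
    apply (hT_ord 0 W).2
    rw [map_zero, hTW, ← AEEqFun.coeFn_le]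
    filter_upwards [AEEqFun.coeFn_zero (β := ℝ) (μ := μ),
      AEEqFun.coeFn_mk (fun x' => phi19 (f x')) ((hmeas _ hΦcont hΦsupp).aestronglyMeasurable)]
      with ω h1 h2
    rw [h1, h2, Pi.zero_apply]
    exact phi19_nonneg _
  obtain ⟨j, hj⟩ : ∃ j : ℕ, (1/2:ℝ)^j * (‖W‖ + 1) < ε/2 := by
    obtain ⟨j, hj⟩ := exists_pow_lt_of_lt_one
      (show (0:ℝ) < (ε/2)/(‖W‖+1) by positivity) (show (1/2:ℝ) < 1 by norm_num)
    refine ⟨j, ?_⟩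
    have hW1 : (0:ℝ) < ‖W‖ + 1 := by positivity
    calc (1/2:ℝ)^j * (‖W‖+1) < ((ε/2)/(‖W‖+1)) * (‖W‖+1) := mul_lt_mul_of_pos_right hj hW1
      _ = ε/2 := by field_simp
  have hmincont : Continuous (fun x' => min (f x') ((1/8:ℝ)^j)) := hfcont.min continuous_const
  have hminsupp : HasCompactSupport (fun x' => min (f x') ((1/8:ℝ)^j)) := by
    apply hfsupp.mono
    intro x' hx'
    simp only [Function.mem_support] at hx' ⊢
    intro h0
    exact hx' (by rw [h0]; exact min_eq_left (by positivity))
  obtain ⟨aη, hTaη⟩ := LinearMap.mem_range.1 (hCc_sub _ hmincont hminsupp)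
  have haη0 : 0 ≤ aη := by
    apply (hT_ord 0 aη).2
    rw [map_zero, hTaη, ← AEEqFun.coeFn_le]
    filter_upwards [AEEqFun.coeFn_zero (β := ℝ) (μ := μ),
      AEEqFun.coeFn_mk (fun x' => min (f x') ((1/8:ℝ)^j))
        ((hmeas _ hmincont hminsupp).aestronglyMeasurable)] with ω h1 h2
    rw [h1, h2, Pi.zero_apply]
    exact le_min (hf0' ω) (by positivity)
  have haηle : aη ≤ (1/2:ℝ)^j • W := by
    rw [hT_ord, _root_.map_smul, ← AEEqFun.coeFn_le]
    have h1 : (T aη : X → ℝ) =ᵐ[μ] (fun x' => min (f x') ((1/8:ℝ)^j)) := by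
      rw [hTaη]; exact AEEqFun.coeFn_mk _ _
    have h2 : (T W : X → ℝ) =ᵐ[μ] (fun x' => phi19 (f x')) := by
      rw [hTW]; exact AEEqFun.coeFn_mk _ _
    filter_upwards [h1, AEEqFun.coeFn_smul ((1/2:ℝ)^j) (T W), h2] with ω e1 e2 e3
    rw [e1, e2, Pi.smul_apply, e3, smul_eq_mul]
    have h := phi19_ge (f ω) j
    rwa [abs_of_nonneg (hf0' ω)] at h
  have hsmul0 : 0 ≤ (1/2:ℝ)^j • W := by
    apply (hT_ord 0 _).2
    rw [map_zero, _root_.map_smul, ← AEEqFun.coeFn_le]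
    have hb : (T W : X → ℝ) =ᵐ[μ] (fun x' => phi19 (f x')) := by
      rw [hTW]; exact AEEqFun.coeFn_mk _ _
    filter_upwards [AEEqFun.coeFn_zero (β := ℝ) (μ := μ),
      AEEqFun.coeFn_smul ((1/2:ℝ)^j) (T W), hb] with ω h1 h2 h3
    rw [h1, Pi.zero_apply, h2, Pi.smul_apply, h3, smul_eq_mul]
    exact mul_nonneg (by positivity) (phi19_nonneg _)
  have haηnorm : ‖aη‖ < ε/2 := by
    have h1 : ‖aη‖ ≤ ‖(1/2:ℝ)^j • W‖ := by
      apply HasSolidNorm.solid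
      rw [abs_of_nonneg haη0, abs_of_nonneg hsmul0]
      exact haηle
    have h2 : ‖(1/2:ℝ)^j • W‖ = (1/2:ℝ)^j * ‖W‖ := by
      rw [norm_smul, Real.norm_eq_abs, abs_of_nonneg (by positivity : (0:ℝ) ≤ (1/2:ℝ)^j)]
    calc ‖aη‖ ≤ (1/2:ℝ)^j * ‖W‖ := h2 ▸ h1
      _ ≤ (1/2:ℝ)^j * (‖W‖ + 1) :=
          mul_le_mul_of_nonneg_left (by linarith [norm_nonneg W]) (by positivity)
      _ < ε/2 := hj
  -- the compact metrizable support and separability of C(K, ℝ)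
  haveI hcs : CompactSpace (tsupport f) := isCompact_iff_compactSpace.1 hfsupp
  haveI := hK (tsupport f) hfsupp
  letI : MetricSpace (tsupport f) := TopologicalSpace.metrizableSpaceMetric _
  obtain ⟨D, hDc, hDd⟩ := TopologicalSpace.exists_countable_dense C(↥(tsupport f), ℝ)
  set R : ℝ → C(↥(tsupport f), ℝ) :=
    fun r => ⟨fun z => χ r z, (hχ1 r).comp continuous_subtype_val⟩ with hR_def
  have hpick : ∀ r : ℝ, ∃ w, w ∈ D ∧ dist (R r) w < (1/8:ℝ)^j / 2 := by
    intro r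
    obtain ⟨w, hw⟩ := Metric.dense_iff.1 hDd (R r) ((1/8:ℝ)^j/2) (by positivity)
    exact ⟨w, hw.2, by have := Metric.mem_ball.1 hw.1; rwa [dist_comm] at this⟩
  choose v hvD hvdist using hpick
  haveI : Countable ↥D := hDc.to_subtype
  have hnotinj : ¬ Function.Injective (fun r : ℝ => (⟨v r, hvD r⟩ : ↥D)) := by
    intro hinj
    haveI : Countable ℝ := hinj.countable
    exact Cardinal.not_countable_real Set.countable_univ
  obtain ⟨r1, r2, hveq, hrne⟩ := Function.not_injective_iff.1 hnotinj
  have hv12 : v r1 = v r2 := congrArg Subtype.val hveq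
  have hRdist : dist (R r1) (R r2) < (1/8:ℝ)^j := by
    calc dist (R r1) (R r2) ≤ dist (R r1) (v r1) + dist (v r1) (R r2) := dist_triangle _ _ _
      _ = dist (R r1) (v r1) + dist (R r2) (v r1) := by rw [dist_comm (v r1) (R r2)]
      _ < (1/8:ℝ)^j/2 + (1/8:ℝ)^j/2 :=
          add_lt_add (hvdist r1) (by rw [hv12]; exact hvdist r2)
      _ = (1/8:ℝ)^j := by ring
  have hχdiff : ∀ x' : X, |χ r2 x' - χ r1 x'| ≤ min (f x') ((1/8:ℝ)^j) := by
    intro x'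
    by_cases hx : x' ∈ tsupport f
    · apply le_min
      · rw [abs_le]
        constructor
        · have ha := hχle r2 x'
          have hb := hχ0 r1 x'
          have hcc := hχle r1 x'
          have hdd := hχ0 r2 x'
          linarith
        · have ha := hχle r2 x'
          have hb := hχ0 r1 x'
          linarith
      · have hd := ContinuousMap.dist_apply_le_dist (f := R r1) (g := R r2)
          (⟨x', hx⟩ : tsupport f)
        have hd' : dist (χ r1 x') (χ r2 x') ≤ dist (R r1) (R r2) := hd
        rw [Real.dist_eq] at hd'
        calc |χ r2 x' - χ r1 x'| = |χ r1 x' - χ r2 x'| := abs_sub_comm _ _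
          _ ≤ dist (R r1) (R r2) := hd'
          _ ≤ (1/8:ℝ)^j := hRdist.le
    · have hfx : f x' = 0 := image_eq_zero_of_notMem_tsupport hx
      have h2 : χ r2 x' = 0 :=
        le_antisymm (by rw [← hfx]; exact hχle r2 x') (hχ0 r2 x')
      have h1 : χ r1 x' = 0 :=
        le_antisymm (by rw [← hfx]; exact hχle r1 x') (hχ0 r1 x')
      rw [h1, h2, sub_zero, abs_zero]
      exact le_min (hf0' x') (by positivity)
  have httle : ‖t r2 - t r1‖ ≤ ‖aη‖ := by
    apply hnorm_le
    have h1 : (T (t r2 - t r1) : X → ℝ) =ᵐ[μ] (T (t r2) : X → ℝ) - (T (t r1) : X → ℝ) := by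
      rw [map_sub T (t r2) (t r1)]; exact AEEqFun.coeFn_sub _ _
    have h2 : (T (t r2) : X → ℝ) =ᵐ[μ] χ r2 := by rw [hTt r2]; exact AEEqFun.coeFn_mk _ _
    have h3 : (T (t r1) : X → ℝ) =ᵐ[μ] χ r1 := by rw [hTt r1]; exact AEEqFun.coeFn_mk _ _
    have h4 : (T aη : X → ℝ) =ᵐ[μ] (fun x' => min (f x') ((1/8:ℝ)^j)) := by
      rw [hTaη]; exact AEEqFun.coeFn_mk _ _
    filter_upwards [h1, h2, h3, h4] with ω e1 e2 e3 e4
    rw [e1, Pi.sub_apply, e2, e3, e4]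
    rw [abs_of_nonneg (le_min (hf0' ω) (by positivity : (0:ℝ) ≤ (1/8:ℝ)^j))]
    exact hχdiff ω
  -- final contradiction
  have hεle : ε ≤ ‖s r2 - s r1‖ := by
    rcases hrne.lt_or_gt with h | h
    · exact hsep r1 r2 h
    · rw [norm_sub_rev]; exact hsep r2 r1 h
  have htri : ‖s r2 - s r1‖ ≤ ‖s r2 - t r2‖ + ‖t r2 - t r1‖ + ‖t r1 - s r1‖ := by
    have hEq : s r2 - s r1 = (s r2 - t r2) + (t r2 - t r1) + (t r1 - s r1) := by abel
    rw [hEq]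
    exact (norm_add_le _ _).trans (add_le_add_left (norm_add_le _ _) _)
  have hn1 : ‖s r2 - t r2‖ < ε/8 := hst r2
  have hn2 : ‖t r1 - s r1‖ < ε/8 := by rw [norm_sub_rev]; exact hst r1
  have hn3 : ‖t r2 - t r1‖ < ε/2 := lt_of_le_of_lt httle haηnorm
  linarith
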